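/- Suppose p_X(x) = p_Y(y) for every pair (x,y) with p_{XY}(x,y) > 0. Then there exists an auxiliary random variable U that is independent of X, independent of Y, and satisfies H(X|Y,U) = 0 and H(Y|X,U) = 0; consequently G_PPI(X;Y) = H(Y|X). -/
import Mathlib


open scoped BigOperators Pointwise Classical

noncomputable section

namespace GW

/-- A probability mass function on a finite type. -/
def IsPMF {α : Type} [Fintype α] (p : α → ℝ) : Prop :=
  (∀ a, 0 ≤ p a) ∧ ∑ a, p a = 1

/-- Distribution (pmf) of the random variable `f` under the pmf `p`. -/
def dist {α β : Type} [Fintype α] (p : α → ℝ) (f : α → β) : β → ℝ :=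
  fun b => ∑ a, if f a = b then p a else 0

/-- Shannon entropy (base 2) of the random variable `f` under the pmf `p`. -/
def H {α β : Type} [Fintype α] [Fintype β] (p : α → ℝ) (f : α → β) : ℝ :=
  ∑ b, -(dist p f b * Real.logb 2 (dist p f b))

/-- Mutual information `I(f; g)` under `p`. -/
def I2 {α β γ : Type} [Fintype α] [Fintype β] [Fintype γ]
    (p : α → ℝ) (f : α → β) (g : α → γ) : ℝ :=
  H p f + H p g - H p (fun a => (f a, g a))

/-- Conditional entropy `H(f | g)` under `p`. -/
def Hc {α β γ : Type} [Fintype α] [Fintype β] [Fintype γ]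
    (p : α → ℝ) (f : α → β) (g : α → γ) : ℝ :=
  H p (fun a => (f a, g a)) - H p g

/-- Conditional mutual information `I(f; g | h)` under `p`. -/
def Ic {α β γ δ : Type} [Fintype α] [Fintype β] [Fintype γ] [Fintype δ]
    (p : α → ℝ) (f : α → β) (g : α → γ) (h : α → δ) : ℝ :=
  Hc p f h + Hc p g h - Hc p (fun a => (f a, g a)) h

/-- Independence of the random variables `f` and `g` under `p`. -/
def Indep {α β γ : Type} [Fintype α] (p : α → ℝ) (f : α → β) (g : α → γ) : Prop :=
  ∀ b c, dist p (fun a => (f a, g a)) (b, c) = dist p f b * dist p g c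

/-- `q` is a joint pmf on `X × Y × U` whose `(X,Y)`-marginal is `p`; i.e. `U` is an
auxiliary random variable defined jointly with `(X,Y)` via a conditional pmf `p_{U|XY}`. -/
def IsAux {X Y U : Type} [Fintype X] [Fintype Y] [Fintype U]
    (p : X × Y → ℝ) (q : X × Y × U → ℝ) : Prop :=
  IsPMF q ∧ ∀ x y, (∑ u, q (x, y, u)) = p (x, y)

/-- Coordinate map onto `X`. -/
def cX {X Y U : Type} : X × Y × U → X := fun a => a.1
/-- Coordinate map onto `Y`. -/
def cY {X Y U : Type} : X × Y × U → Y := fun a => a.2.1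
/-- Coordinate map onto `U`. -/
def cU {X Y U : Type} : X × Y × U → U := fun a => a.2.2
/-- Coordinate map onto `X × Y`. -/
def cXY {X Y U : Type} : X × Y × U → X × Y := fun a => (a.1, a.2.1)

/-- The mutual information region `𝓘_{XY}`. -/
def MIRegion {X Y : Type} [Fintype X] [Fintype Y] (p : X × Y → ℝ) : Set (ℝ × ℝ × ℝ) :=
  { v | ∃ (U : Type) (_ : Fintype U) (q : X × Y × U → ℝ), IsAux p q ∧
      v = (I2 q cX cU, I2 q cY cU, I2 q cXY cU) }

/-- The outer region `𝓘ᵒ_{XY}`. -/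
def OuterRegion {X Y : Type} [Fintype X] [Fintype Y] (p : X × Y → ℝ) : Set (ℝ × ℝ × ℝ) :=
  { v | 0 ≤ v.1 ∧ 0 ≤ v.2.1 ∧ v.1 + v.2.1 - v.2.2 ≤ I2 p Prod.fst Prod.snd ∧
        0 ≤ v.2.2 - v.2.1 ∧ v.2.2 - v.2.1 ≤ Hc p Prod.fst Prod.snd ∧
        0 ≤ v.2.2 - v.1 ∧ v.2.2 - v.1 ≤ Hc p Prod.snd Prod.fst }

/-- Maximal interaction information `G_NNI(X; Y)`. -/
def GNNI {X Y : Type} [Fintype X] [Fintype Y] (p : X × Y → ℝ) : ℝ :=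
  sSup { r | ∃ (U : Type) (_ : Fintype U) (q : X × Y × U → ℝ), IsAux p q ∧
      r = Ic q cX cY cU - I2 p Prod.fst Prod.snd }

/-- Asymmetric private interaction information `G_PNI(X → Y)`. -/
def GPNI {X Y : Type} [Fintype X] [Fintype Y] (p : X × Y → ℝ) : ℝ :=
  sSup { r | ∃ (U : Type) (_ : Fintype U) (q : X × Y × U → ℝ), IsAux p q ∧
      Indep q cU cX ∧ r = Ic q cX cY cU - I2 p Prod.fst Prod.snd }

/-- Symmetric private interaction information `G_PPI(X; Y)`. -/
def GPPI {X Y : Type} [Fintype X] [Fintype Y] (p : X × Y → ℝ) : ℝ :=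
  sSup { r | ∃ (U : Type) (_ : Fintype U) (q : X × Y × U → ℝ), IsAux p q ∧
      Indep q cU cX ∧ Indep q cU cY ∧ r = Ic q cX cY cU - I2 p Prod.fst Prod.snd }


-- basic lemmas
lemma dist_nonneg' {α β : Type} [Fintype α] {p : α → ℝ} (hp : ∀ a, 0 ≤ p a)
    (f : α → β) (b : β) : 0 ≤ dist p f b :=
  Finset.sum_nonneg fun a _ => by by_cases h : f a = b <;> simp [h, hp a]

lemma sum_dist {α β : Type} [Fintype α] [Fintype β] (p : α → ℝ) (f : α → β) :
    ∑ b, dist p f b = ∑ a, p a := by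
  unfold dist
  rw [Finset.sum_comm]
  exact Finset.sum_congr rfl fun a _ => by simp

lemma H_comp_equiv {α β γ : Type} [Fintype α] [Fintype β] [Fintype γ]
    (p : α → ℝ) (f : α → β) (e : β ≃ γ) :
    H p (fun a => e (f a)) = H p f := by
  have hd : ∀ b, dist p (fun a => e (f a)) (e b) = dist p f b := by
    intro b
    refine Finset.sum_congr rfl fun a _ => by simp
  rw [H, ← Equiv.sum_comp e (fun c => -(dist p (fun a => e (f a)) c *
    Real.logb 2 (dist p (fun a => e (f a)) c)))]
  rw [H]
  exact Finset.sum_congr rfl fun b _ => by rw [hd]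


-- collapse lemma: if f is a.e. a function of h, then H (f,h) = H h
lemma dist_pair_of_det {α β γ : Type} [Fintype α] {p : α → ℝ} {f : α → β} {h : α → γ}
    {g : γ → β} (hdet : ∀ a, p a ≠ 0 → f a = g (h a)) (b : β) (c : γ) :
    dist p (fun a => (f a, h a)) (b, c) = if b = g c then dist p h c else 0 := by
  unfold dist
  by_cases hb : b = g c
  · subst hb
    simp only [if_true]
    refine Finset.sum_congr rfl fun a _ => ?_
    by_cases hpa : p a = 0
    · simp [hpa]
    · have hfa := hdet a hpa
      by_cases hc : h a = c
      · simp [hc, Prod.ext_iff, hfa]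
      · simp [hc, Prod.ext_iff]
  · simp only [hb, if_false]
    refine Finset.sum_eq_zero fun a _ => ?_
    by_cases hpa : p a = 0
    · simp [hpa]
    · have hfa := hdet a hpa
      by_cases hc : h a = c
      · simp only [Prod.ext_iff]
        rw [if_neg]
        rintro ⟨h1, _⟩
        apply hb
        rw [← h1, hfa, hc]
      · simp [Prod.ext_iff, hc]

lemma H_pair_of_det {α β γ : Type} [Fintype α] [Fintype β] [Fintype γ]
    {p : α → ℝ} {f : α → β} {h : α → γ}
    {g : γ → β} (hdet : ∀ a, p a ≠ 0 → f a = g (h a)) :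
    H p (fun a => (f a, h a)) = H p h := by
  unfold H
  rw [Fintype.sum_prod_type]
  rw [Finset.sum_comm]
  refine Finset.sum_congr rfl fun c _ => ?_
  have : ∀ b, dist p (fun a => (f a, h a)) (b, c) = if b = g c then dist p h c else 0 :=
    fun b => dist_pair_of_det hdet b c
  calc ∑ b, -(dist p (fun a => (f a, h a)) (b, c) *
        Real.logb 2 (dist p (fun a => (f a, h a)) (b, c)))
      = ∑ b, (if b = g c then -(dist p h c * Real.logb 2 (dist p h c)) else 0) := by
        refine Finset.sum_congr rfl fun b _ => ?_
        rw [this b]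
        by_cases hb : b = g c <;> simp [hb]
    _ = -(dist p h c * Real.logb 2 (dist p h c)) := by
        rw [Finset.sum_ite_eq' Finset.univ (g c)]
        simp

-- marginalization
lemma dist_fst_marginal {α β γ : Type} [Fintype α] [Fintype β] (p : α → ℝ)
    (f : α → β) (h : α → γ) (c : γ) :
    dist p h c = ∑ b, dist p (fun a => (f a, h a)) (b, c) := by
  unfold dist
  rw [Finset.sum_comm]
  refine Finset.sum_congr rfl fun a _ => ?_
  by_cases hc : h a = c
  · simp [hc, Prod.ext_iff]
  · simp [hc, Prod.ext_iff]

-- monotonicity: H h ≤ H (f, h)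
lemma H_le_H_pair {α β γ : Type} [Fintype α] [Fintype β] [Fintype γ]
    {p : α → ℝ} (hp : ∀ a, 0 ≤ p a) (f : α → β) (h : α → γ) :
    H p h ≤ H p (fun a => (f a, h a)) := by
  unfold H
  rw [Fintype.sum_prod_type, Finset.sum_comm]
  refine Finset.sum_le_sum fun c _ => ?_
  set d : β → ℝ := fun b => dist p (fun a => (f a, h a)) (b, c) with hd
  have hm : dist p h c = ∑ b, d b := dist_fst_marginal p f h c
  have hdn : ∀ b, 0 ≤ d b := fun b => dist_nonneg' hp _ _
  rw [hm]
  have hble : ∀ b, d b ≤ ∑ b', d b' := fun b =>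
    Finset.single_le_sum (fun b' _ => hdn b') (Finset.mem_univ b)
  calc -((∑ b, d b) * Real.logb 2 (∑ b, d b))
      = ∑ b, -(d b * Real.logb 2 (∑ b', d b')) := by
        simp only [neg_mul_eq_mul_neg, ← Finset.sum_mul]
    _ ≤ ∑ b, -(d b * Real.logb 2 (d b)) := by
        refine Finset.sum_le_sum fun b _ => ?_
        rcases eq_or_lt_of_le (hdn b) with h0 | h0
        · simp [← h0]
        · have : Real.logb 2 (d b) ≤ Real.logb 2 (∑ b', d b') :=
            Real.logb_le_logb_of_le one_lt_two h0 (hble b)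
          nlinarith

lemma phi_mul {s t : ℝ} (hs : 0 ≤ s) (ht : 0 ≤ t) :
    -(s * t * Real.logb 2 (s * t)) =
      t * -(s * Real.logb 2 s) + s * -(t * Real.logb 2 t) := by
  rcases eq_or_lt_of_le hs with h0 | h0
  · simp [← h0]
  rcases eq_or_lt_of_le ht with h1 | h1
  · simp [← h1]
  rw [Real.logb_mul (ne_of_gt h0) (ne_of_gt h1)]
  ring

lemma H_indep {α β γ : Type} [Fintype α] [Fintype β] [Fintype γ] {p : α → ℝ}
    (hp : IsPMF p) {f : α → β} {g : α → γ} (h : Indep p f g) :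
    H p (fun a => (f a, g a)) = H p f + H p g := by
  have hsf : ∑ b, dist p f b = 1 := by rw [sum_dist, hp.2]
  have hsg : ∑ c, dist p g c = 1 := by rw [sum_dist, hp.2]
  unfold H
  rw [Fintype.sum_prod_type]
  calc ∑ b, ∑ c, -(dist p (fun a => (f a, g a)) (b, c) *
        Real.logb 2 (dist p (fun a => (f a, g a)) (b, c)))
      = ∑ b, ∑ c, (dist p g c * -(dist p f b * Real.logb 2 (dist p f b)) +
          dist p f b * -(dist p g c * Real.logb 2 (dist p g c))) := by
        refine Finset.sum_congr rfl fun b _ => Finset.sum_congr rfl fun c _ => ?_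
        rw [h b c]
        exact phi_mul (dist_nonneg' hp.1 f b) (dist_nonneg' hp.1 g c)
    _ = ∑ b, ((∑ c, dist p g c) * -(dist p f b * Real.logb 2 (dist p f b)) +
          dist p f b * ∑ c, -(dist p g c * Real.logb 2 (dist p g c))) := by
        refine Finset.sum_congr rfl fun b _ => ?_
        rw [Finset.sum_add_distrib, ← Finset.sum_mul, ← Finset.mul_sum]
    _ = ∑ b, -(dist p f b * Real.logb 2 (dist p f b)) +
          ∑ c, -(dist p g c * Real.logb 2 (dist p g c)) := by
        rw [Finset.sum_add_distrib, ← Finset.sum_mul]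
        simp [hsf, hsg]


lemma marg_fst {X Y : Type} [Fintype X] [Fintype Y] (p : X × Y → ℝ) (x : X) :
    dist p Prod.fst x = ∑ y, p (x, y) := by
  unfold dist
  calc ∑ a : X × Y, (if a.1 = x then p a else 0)
      = ∑ x', ∑ y, (if x' = x then p (x', y) else 0) := Fintype.sum_prod_type _
    _ = ∑ x', (if x' = x then ∑ y, p (x', y) else 0) := by
        refine Finset.sum_congr rfl fun x' _ => ?_
        by_cases h : x' = x <;> simp [h]
    _ = ∑ y, p (x, y) := by rw [Finset.sum_ite_eq' Finset.univ x]; simp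

lemma marg_snd {X Y : Type} [Fintype X] [Fintype Y] (p : X × Y → ℝ) (y : Y) :
    dist p Prod.snd y = ∑ x, p (x, y) := by
  unfold dist
  calc ∑ a : X × Y, (if a.2 = y then p a else 0)
      = ∑ x, ∑ y', (if y' = y then p (x, y') else 0) := Fintype.sum_prod_type _
    _ = ∑ x, p (x, y) := by
        refine Finset.sum_congr rfl fun x _ => ?_
        rw [Finset.sum_ite_eq' Finset.univ y]; simp

lemma p_le_marg_fst {X Y : Type} [Fintype X] [Fintype Y] {p : X × Y → ℝ}
    (hp : ∀ a, 0 ≤ p a) (x : X) (y : Y) : p (x, y) ≤ dist p Prod.fst x := by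
  rw [marg_fst]
  exact Finset.single_le_sum (fun y' _ => hp (x, y')) (Finset.mem_univ y)

lemma p_zero_of_marg_fst {X Y : Type} [Fintype X] [Fintype Y] {p : X × Y → ℝ}
    (hp : ∀ a, 0 ≤ p a) {x : X} (hx : dist p Prod.fst x = 0) (y : Y) : p (x, y) = 0 :=
  le_antisymm (hx ▸ p_le_marg_fst hp x y) (hp (x, y))

/-- The doubly stochastic matrix associated with `p`. -/
def NMat {X Y : Type} [Fintype X] [Fintype Y] (p : X × Y → ℝ) :
    Matrix (X ⊕ Y) (X ⊕ Y) ℝ := fun i j =>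
  match i, j with
  | Sum.inl x, Sum.inr y => p (x, y) / dist p Prod.fst x
  | Sum.inr y, Sum.inl x => p (x, y) / dist p Prod.fst x
  | Sum.inl x, Sum.inl x' => if x = x' ∧ dist p Prod.fst x = 0 then 1 else 0
  | Sum.inr y, Sum.inr y' => if y = y' ∧ dist p Prod.snd y = 0 then 1 else 0

lemma NMat_symm {X Y : Type} [Fintype X] [Fintype Y] (p : X × Y → ℝ)
    (i j : X ⊕ Y) : NMat p i j = NMat p j i := by
  rcases i with x | y <;> rcases j with x' | y' <;> simp only [NMat]
  · by_cases h : x = x'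
    · subst h; rfl
    · rw [if_neg (by rintro ⟨rfl, -⟩; exact h rfl), if_neg (by rintro ⟨rfl, -⟩; exact h rfl)]
  · by_cases h : y = y'
    · subst h; rfl
    · rw [if_neg (by rintro ⟨rfl, -⟩; exact h rfl), if_neg (by rintro ⟨rfl, -⟩; exact h rfl)]

lemma NMat_row_sum {X Y : Type} [Fintype X] [Fintype Y] {p : X × Y → ℝ} (hp : IsPMF p)
    (hmarg : ∀ x y, 0 < p (x, y) → dist p Prod.fst x = dist p Prod.snd y)
    (i : X ⊕ Y) : ∑ j, NMat p i j = 1 := by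
  rw [Fintype.sum_sum_type]
  rcases i with x | y
  · have h1 : ∑ x', NMat p (Sum.inl x) (Sum.inl x') =
        (if dist p Prod.fst x = 0 then 1 else 0) := by
      simp only [NMat]
      rw [Finset.sum_congr rfl (fun x' (_ : x' ∈ (Finset.univ : Finset X)) =>
        ite_and (x = x') (dist p Prod.fst x = 0) (1 : ℝ) 0),
        Finset.sum_ite_eq Finset.univ x]
      simp
    have h2 : ∑ y, NMat p (Sum.inl x) (Sum.inr y) = dist p Prod.fst x / dist p Prod.fst x := by
      simp only [NMat]
      rw [← Finset.sum_div, ← marg_fst]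
    rw [h1, h2]
    by_cases hx : dist p Prod.fst x = 0
    · simp [hx]
    · rw [div_self hx]; simp [hx]
  · have h1 : ∑ x, NMat p (Sum.inr y) (Sum.inl x) = dist p Prod.snd y / dist p Prod.snd y := by
      simp only [NMat]
      have hdiv : ∀ x, p (x, y) / dist p Prod.fst x = p (x, y) / dist p Prod.snd y := by
        intro x
        by_cases hxy : p (x, y) = 0
        · rw [hxy, zero_div, zero_div]
        · rw [hmarg x y (lt_of_le_of_ne (hp.1 (x, y)) (Ne.symm hxy))]
      rw [Finset.sum_congr rfl fun x _ => hdiv x, ← Finset.sum_div, ← marg_snd]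
    have h2 : ∑ y', NMat p (Sum.inr y) (Sum.inr y') =
        (if dist p Prod.snd y = 0 then 1 else 0) := by
      simp only [NMat]
      rw [Finset.sum_congr rfl (fun y' (_ : y' ∈ (Finset.univ : Finset Y)) =>
        ite_and (y = y') (dist p Prod.snd y = 0) (1 : ℝ) 0),
        Finset.sum_ite_eq Finset.univ y]
      simp
    rw [h1, h2]
    by_cases hy : dist p Prod.snd y = 0
    · simp [hy]
    · rw [div_self hy]; simp [hy]

lemma NMat_mem {X Y : Type} [Fintype X] [Fintype Y] {p : X × Y → ℝ} (hp : IsPMF p)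
    (hmarg : ∀ x y, 0 < p (x, y) → dist p Prod.fst x = dist p Prod.snd y) :
    NMat p ∈ doublyStochastic ℝ (X ⊕ Y) := by
  rw [mem_doublyStochastic_iff_sum]
  refine ⟨fun i j => ?_, fun i => NMat_row_sum hp hmarg i, fun j => ?_⟩
  · rcases i with x | y <;> rcases j with x' | y' <;> simp only [NMat]
    · positivity
    · exact div_nonneg (hp.1 _) (dist_nonneg' hp.1 _ _)
    · exact div_nonneg (hp.1 _) (dist_nonneg' hp.1 _ _)
    · positivity
  · rw [Finset.sum_congr rfl fun i _ => NMat_symm p i j]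
    exact NMat_row_sum hp hmarg j


lemma sum_prod3 {X Y U : Type} [Fintype X] [Fintype Y] [Fintype U] (G : X × Y × U → ℝ) :
    ∑ a, G a = ∑ x, ∑ y, ∑ u, G (x, y, u) := by
  rw [Fintype.sum_prod_type]
  exact Finset.sum_congr rfl fun x _ => Fintype.sum_prod_type _


section evals
variable {X Y U : Type} [Fintype X] [Fintype Y] [Fintype U] (q : X × Y × U → ℝ)

lemma dist_cU_eval (σ : U) : dist q cU σ = ∑ x, ∑ y, q (x, y, σ) := by
  unfold dist
  rw [sum_prod3]
  refine Finset.sum_congr rfl fun x _ => Finset.sum_congr rfl fun y _ => ?_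
  rw [Finset.sum_eq_single σ]
  · exact if_pos rfl
  · intro u _ hu
    exact if_neg fun hh => hu hh
  · intro h
    exact absurd (Finset.mem_univ σ) h

lemma dist_cX_eval (x : X) : dist q cX x = ∑ y, ∑ u, q (x, y, u) := by
  unfold dist
  rw [sum_prod3]
  rw [Finset.sum_eq_single x]
  · exact Finset.sum_congr rfl fun y _ => Finset.sum_congr rfl fun u _ => if_pos rfl
  · intro x' _ hx'
    exact Finset.sum_eq_zero fun y _ => Finset.sum_eq_zero fun u _ =>
      if_neg fun hh => hx' hh
  · intro h
    exact absurd (Finset.mem_univ x) h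

lemma dist_cY_eval (y : Y) : dist q cY y = ∑ x, ∑ u, q (x, y, u) := by
  unfold dist
  rw [sum_prod3]
  refine Finset.sum_congr rfl fun x _ => ?_
  rw [Finset.sum_eq_single y]
  · exact Finset.sum_congr rfl fun u _ => if_pos rfl
  · intro y' _ hy'
    exact Finset.sum_eq_zero fun u _ => if_neg fun hh => hy' hh
  · intro h
    exact absurd (Finset.mem_univ y) h

lemma dist_cUcX_eval (σ : U) (x : X) :
    dist q (fun a => (cU a, cX a)) (σ, x) = ∑ y, q (x, y, σ) := by
  unfold dist
  rw [sum_prod3]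
  rw [Finset.sum_eq_single x]
  · refine Finset.sum_congr rfl fun y _ => ?_
    rw [Finset.sum_eq_single σ]
    · exact if_pos rfl
    · intro u _ hu
      exact if_neg fun hh => hu (congrArg Prod.fst hh)
    · intro h
      exact absurd (Finset.mem_univ σ) h
  · intro x' _ hx'
    exact Finset.sum_eq_zero fun y _ => Finset.sum_eq_zero fun u _ =>
      if_neg fun hh => hx' (congrArg Prod.snd hh)
  · intro h
    exact absurd (Finset.mem_univ x) h

lemma dist_cUcY_eval (σ : U) (y : Y) :
    dist q (fun a => (cU a, cY a)) (σ, y) = ∑ x, q (x, y, σ) := by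
  unfold dist
  rw [sum_prod3]
  refine Finset.sum_congr rfl fun x _ => ?_
  rw [Finset.sum_eq_single y]
  · rw [Finset.sum_eq_single σ]
    · exact if_pos rfl
    · intro u _ hu
      exact if_neg fun hh => hu (congrArg Prod.fst hh)
    · intro h
      exact absurd (Finset.mem_univ σ) h
  · intro y' _ hy'
    exact Finset.sum_eq_zero fun u _ => if_neg fun hh => hy' (congrArg Prod.snd hh)
  · intro h
    exact absurd (Finset.mem_univ y) h

end evals

set_option maxHeartbeats 1000000 in
theorem construction {X Y : Type} [Fintype X] [Fintype Y] (p : X × Y → ℝ) (hp : IsPMF p)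
    (hmarg : ∀ x y, 0 < p (x, y) → dist p Prod.fst x = dist p Prod.snd y) :
    ∃ (U : Type) (_ : Fintype U) (q : X × Y × U → ℝ), IsAux p q ∧
      Indep q cU cX ∧ Indep q cU cY ∧
      (∃ g : Y × U → X, ∀ a, q a ≠ 0 → cX a = g (cY a, cU a)) ∧
      (∃ g' : X × U → Y, ∀ a, q a ≠ 0 → cY a = g' (cX a, cU a)) := by
  classical
  have hne : Nonempty (X × Y) := by
    by_contra h
    rw [not_nonempty_iff] at h
    have := hp.2
    rw [Finset.univ_eq_empty, Finset.sum_empty] at this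
    exact one_ne_zero this.symm
  have hneX : Nonempty X := ⟨hne.some.1⟩
  have hneY : Nonempty Y := ⟨hne.some.2⟩
  obtain ⟨w, hw0, hw1, hwN⟩ := exists_eq_sum_perm_of_mem_doublyStochastic (NMat_mem hp hmarg)
  -- entrywise form of the Birkhoff decomposition
  have hNw : ∀ i j, (∑ σ : Equiv.Perm (X ⊕ Y), w σ * (if σ i = j then 1 else 0))
      = NMat p i j := by
    intro i j
    rw [← hwN, Matrix.sum_apply i j Finset.univ _]
    refine Finset.sum_congr rfl fun σ _ => ?_
    simp [Matrix.smul_apply, Equiv.Perm.permMatrix, PEquiv.toMatrix_apply,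
      Equiv.toPEquiv_apply, Option.mem_def, smul_eq_mul, eq_comm]
  have hkey : ∀ (σ : Equiv.Perm (X ⊕ Y)) (i : X ⊕ Y), w σ ≠ 0 → 0 < NMat p i (σ i) := by
    intro σ i hσ
    have h1 : w σ ≤ NMat p i (σ i) := by
      rw [← hNw i (σ i)]
      have h2 := Finset.single_le_sum
        (f := fun σ' : Equiv.Perm (X ⊕ Y) => w σ' * (if σ' i = σ i then 1 else 0))
        (fun σ' _ => mul_nonneg (hw0 σ') (by split <;> norm_num)) (Finset.mem_univ σ)
      simpa using h2
    exact lt_of_lt_of_le (lt_of_le_of_ne (hw0 σ) (Ne.symm hσ)) h1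
  -- the joint pmf
  set q : X × Y × Equiv.Perm (X ⊕ Y) → ℝ :=
    fun a => w a.2.2 * dist p Prod.fst a.1 *
      (if a.2.2 (Sum.inl a.1) = Sum.inr a.2.1 then 1 else 0) with hq
  have hq0 : ∀ a, 0 ≤ q a := fun a =>
    mul_nonneg (mul_nonneg (hw0 a.2.2) (dist_nonneg' hp.1 Prod.fst a.1))
      (by split <;> norm_num)
  -- support structure
  have hsupA : ∀ (x : X) (σ : Equiv.Perm (X ⊕ Y)), dist p Prod.fst x ≠ 0 → w σ ≠ 0 →
      ∃ y, σ (Sum.inl x) = Sum.inr y ∧ 0 < p (x, y) := by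
    intro x σ hx hσ
    have h := hkey σ (Sum.inl x) hσ
    rcases hσj : σ (Sum.inl x) with x' | y
    · rw [hσj] at h
      simp only [NMat] at h
      by_cases hc : x = x' ∧ dist p Prod.fst x = 0
      · exact absurd hc.2 hx
      · rw [if_neg hc] at h; exact absurd h (lt_irrefl 0)
    · rw [hσj] at h
      simp only [NMat] at h
      refine ⟨y, rfl, ?_⟩
      by_contra hpxy
      have h0 : p (x, y) = 0 := le_antisymm (not_lt.1 hpxy) (hp.1 (x, y))
      rw [h0, zero_div] at h
      exact lt_irrefl 0 h
  have hsupB : ∀ (y : Y) (σ : Equiv.Perm (X ⊕ Y)), w σ ≠ 0 →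
      (dist p Prod.snd y = 0 ∧ ∀ x, σ (Sum.inl x) ≠ Sum.inr y) ∨
      (∃ x, σ (Sum.inl x) = Sum.inr y ∧ dist p Prod.fst x = dist p Prod.snd y) := by
    intro y σ hσ
    have h := hkey σ (σ.symm (Sum.inr y)) hσ
    rw [Equiv.apply_symm_apply] at h
    rcases hj : σ.symm (Sum.inr y) with x | y'
    · right
      rw [hj] at h
      simp only [NMat] at h
      have hσx : σ (Sum.inl x) = Sum.inr y := by
        rw [← hj, Equiv.apply_symm_apply]
      have hpxy : 0 < p (x, y) := by
        by_contra hc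
        have h0 : p (x, y) = 0 := le_antisymm (not_lt.1 hc) (hp.1 (x, y))
        rw [h0, zero_div] at h
        exact lt_irrefl 0 h
      exact ⟨x, hσx, hmarg x y hpxy⟩
    · left
      rw [hj] at h
      simp only [NMat] at h
      by_cases hc : y' = y ∧ dist p Prod.snd y' = 0
      · refine ⟨hc.1 ▸ hc.2, fun x hx => ?_⟩
        have : (Sum.inl x : X ⊕ Y) = Sum.inr y' := by
          rw [← hj]
          exact (Equiv.eq_symm_apply σ).2 hx
        exact Sum.inl_ne_inr this
      · rw [if_neg hc] at h; exact absurd h (lt_irrefl 0)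
  -- marginal over u
  have hmargq : ∀ x y, (∑ σ : Equiv.Perm (X ⊕ Y), q (x, y, σ)) = p (x, y) := by
    intro x y
    have hstep : (∑ σ : Equiv.Perm (X ⊕ Y), q (x, y, σ)) =
        dist p Prod.fst x * ∑ σ : Equiv.Perm (X ⊕ Y),
          w σ * (if σ (Sum.inl x) = Sum.inr y then 1 else 0) := by
      rw [Finset.mul_sum]
      exact Finset.sum_congr rfl fun σ _ => by simp only [hq]; ring
    rw [hstep, hNw (Sum.inl x) (Sum.inr y)]
    simp only [NMat]
    by_cases hx : dist p Prod.fst x = 0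
    · rw [hx, zero_mul]
      exact (p_zero_of_marg_fst hp.1 hx y).symm
    · rw [mul_div_cancel₀ _ hx]
  -- sums over y and x
  have hXU : ∀ (σ : Equiv.Perm (X ⊕ Y)) (x : X),
      (∑ y, q (x, y, σ)) = w σ * dist p Prod.fst x := by
    intro σ x
    by_cases hσ : w σ = 0
    · simp [hq, hσ]
    by_cases hx : dist p Prod.fst x = 0
    · simp [hq, hx]
    obtain ⟨y₀, hy₀, -⟩ := hsupA x σ hx hσ
    calc (∑ y, q (x, y, σ))
        = ∑ y, (if y₀ = y then w σ * dist p Prod.fst x else 0) := by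
          refine Finset.sum_congr rfl fun y _ => ?_
          simp only [hq, hy₀, Sum.inr.injEq]
          by_cases h : y₀ = y <;> simp [h]
      _ = w σ * dist p Prod.fst x := by rw [Finset.sum_ite_eq Finset.univ y₀]; simp
  have hYU : ∀ (σ : Equiv.Perm (X ⊕ Y)) (y : Y),
      (∑ x, q (x, y, σ)) = w σ * dist p Prod.snd y := by
    intro σ y
    by_cases hσ : w σ = 0
    · simp [hq, hσ]
    rcases hsupB y σ hσ with ⟨hpy0, hnone⟩ | ⟨x₀, hx₀, hpxy⟩
    · rw [hpy0, mul_zero]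
      refine Finset.sum_eq_zero fun x _ => ?_
      simp [hq, hnone x]
    · calc (∑ x, q (x, y, σ))
          = ∑ x, (if x₀ = x then w σ * dist p Prod.fst x else 0) := by
            refine Finset.sum_congr rfl fun x _ => ?_
            have hiff : σ (Sum.inl x) = Sum.inr y ↔ x₀ = x := by
              constructor
              · intro h
                have h2 := σ.injective (h.trans hx₀.symm)
                exact (Sum.inl.injEq x x₀ ▸ h2).symm
              · rintro rfl; exact hx₀
            simp only [hq]
            by_cases h : x₀ = x <;> simp [h, hiff]
        _ = w σ * dist p Prod.snd y := by
            rw [Finset.sum_ite_eq Finset.univ x₀]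
            simp [hpxy]
  have hsum_px : ∑ x, dist p Prod.fst x = 1 := by rw [sum_dist, hp.2]
  -- IsAux
  have haux : IsAux p q := by
    refine ⟨⟨hq0, ?_⟩, hmargq⟩
    rw [sum_prod3 q]
    calc ∑ x, ∑ y, ∑ σ : Equiv.Perm (X ⊕ Y), q (x, y, σ) = ∑ x, ∑ y, p (x, y) :=
          Finset.sum_congr rfl fun x _ => Finset.sum_congr rfl fun y _ => hmargq x y
      _ = 1 := by rw [← Fintype.sum_prod_type]; exact hp.2
  -- dist computations
  have hdU : ∀ σ : Equiv.Perm (X ⊕ Y), dist q cU σ = w σ := by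
    intro σ
    rw [dist_cU_eval]
    calc ∑ x, ∑ y, q (x, y, σ)
        = ∑ x, w σ * dist p Prod.fst x := Finset.sum_congr rfl fun x _ => hXU σ x
      _ = w σ := by rw [← Finset.mul_sum, hsum_px, mul_one]
  have hdX : ∀ x, dist q cX x = dist p Prod.fst x := by
    intro x
    rw [dist_cX_eval]
    calc ∑ y, ∑ σ : Equiv.Perm (X ⊕ Y), q (x, y, σ)
        = ∑ y, p (x, y) := Finset.sum_congr rfl fun y _ => hmargq x y
      _ = dist p Prod.fst x := (marg_fst p x).symm
  have hdY : ∀ y, dist q cY y = dist p Prod.snd y := by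
    intro y
    rw [dist_cY_eval]
    calc ∑ x, ∑ σ : Equiv.Perm (X ⊕ Y), q (x, y, σ)
        = ∑ σ : Equiv.Perm (X ⊕ Y), ∑ x, q (x, y, σ) := by rw [Finset.sum_comm]
      _ = ∑ σ : Equiv.Perm (X ⊕ Y), w σ * dist p Prod.snd y :=
          Finset.sum_congr rfl fun σ _ => hYU σ y
      _ = dist p Prod.snd y := by rw [← Finset.sum_mul, hw1, one_mul]
  -- independence
  have hIndX : Indep q cU cX := by
    intro σ x
    rw [dist_cUcX_eval, hXU σ x, hdU σ, hdX x]
  have hIndY : Indep q cU cY := by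
    intro σ y
    rw [dist_cUcY_eval, hYU σ y, hdU σ, hdY y]
  -- determinism
  have hdetX : ∃ g : Y × Equiv.Perm (X ⊕ Y) → X, ∀ a, q a ≠ 0 → cX a = g (cY a, cU a) := by
    refine ⟨fun b => Sum.elim id (fun _ => Classical.choice hneX) ((b.2).symm (Sum.inr b.1)),
      fun a ha => ?_⟩
    obtain ⟨x, y, σ⟩ := a
    have hind : σ (Sum.inl x) = Sum.inr y := by
      by_contra h
      simp [hq, h] at ha
    have hsymm : σ.symm (Sum.inr y) = Sum.inl x := by
      rw [← hind, Equiv.symm_apply_apply]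
    simp only [cX, cY, cU, hsymm, Sum.elim_inl, id]
  have hdetY : ∃ g' : X × Equiv.Perm (X ⊕ Y) → Y, ∀ a, q a ≠ 0 → cY a = g' (cX a, cU a) := by
    refine ⟨fun b => Sum.elim (fun _ => Classical.choice hneY) id ((b.2) (Sum.inl b.1)),
      fun a ha => ?_⟩
    obtain ⟨x, y, σ⟩ := a
    have hind : σ (Sum.inl x) = Sum.inr y := by
      by_contra h
      simp [hq, h] at ha
    simp only [cX, cY, cU, hind, Sum.elim_inr, id]
  exact ⟨Equiv.Perm (X ⊕ Y), inferInstance, q, haux, hIndX, hIndY, hdetX, hdetY⟩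

/-- Regrouping equivalence. -/
def regroup (X Y U : Type) : (X × Y) × U ≃ Y × X × U where
  toFun a := (a.1.2, a.1.1, a.2)
  invFun b := ((b.2.1, b.1), b.2.2)
  left_inv _ := rfl
  right_inv _ := rfl

lemma H_swap {α β γ : Type} [Fintype α] [Fintype β] [Fintype γ]
    (p : α → ℝ) (f : α → β) (g : α → γ) :
    H p (fun a => (g a, f a)) = H p (fun a => (f a, g a)) := by
  exact H_comp_equiv p (fun a => (f a, g a)) (Equiv.prodComm β γ)

lemma H_congr_dist {α α' β : Type} [Fintype α] [Fintype α'] [Fintype β]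
    {p : α → ℝ} {f : α → β} {p' : α' → ℝ} {f' : α' → β}
    (h : ∀ b, dist p f b = dist p' f' b) : H p f = H p' f' := by
  unfold H
  exact Finset.sum_congr rfl fun b _ => by rw [h b]

lemma dist_cY_aux {X Y U : Type} [Fintype X] [Fintype Y] [Fintype U] {p : X × Y → ℝ}
    {q : X × Y × U → ℝ} (haux : IsAux p q) (y : Y) :
    dist q cY y = dist p Prod.snd y := by
  rw [dist_cY_eval, marg_snd]
  exact Finset.sum_congr rfl fun x _ => haux.2 x y

lemma Hc_cX_cU_eq {X Y U : Type} [Fintype X] [Fintype Y] [Fintype U]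
    {q : X × Y × U → ℝ} (hq : IsPMF q) (h1 : Indep q cU cX) :
    Hc q cX cU = H q cX := by
  unfold Hc
  rw [H_swap q cU cX, H_indep hq h1]
  ring

lemma Hc_cY_cU_eq {X Y U : Type} [Fintype X] [Fintype Y] [Fintype U]
    {q : X × Y × U → ℝ} (hq : IsPMF q) (h2 : Indep q cU cY) :
    Hc q cY cU = H q cY := by
  unfold Hc
  have hs : H q (fun a => (cY a, cU a)) = H q (fun a => (cU a, cY a)) := H_swap q cU cY
  rw [hs, H_indep hq h2]
  ring

lemma H_triple_regroup {X Y U : Type} [Fintype X] [Fintype Y] [Fintype U]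
    (q : X × Y × U → ℝ) :
    H q (fun a => ((cX a, cY a), cU a)) = H q (fun a => (cY a, (cX a, cU a))) := by
  exact (H_comp_equiv q (fun a => ((cX a, cY a), cU a)) (regroup X Y U)).symm

lemma H_cXcU_eq {X Y U : Type} [Fintype X] [Fintype Y] [Fintype U]
    {q : X × Y × U → ℝ} (hq : IsPMF q) (h1 : Indep q cU cX) :
    H q (fun a => (cX a, cU a)) = H q cX + H q cU := by
  rw [H_swap q cU cX, H_indep hq h1]
  ring

lemma Ic_le_H_snd {X Y U : Type} [Fintype X] [Fintype Y] [Fintype U] {p : X × Y → ℝ}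
    {q : X × Y × U → ℝ} (haux : IsAux p q) (h1 : Indep q cU cX) (h2 : Indep q cU cY) :
    Ic q cX cY cU ≤ H p Prod.snd := by
  have hq := haux.1
  have e1 := Hc_cX_cU_eq hq h1
  have e2 := Hc_cY_cU_eq hq h2
  have e3 : H q cX ≤ Hc q (fun a => (cX a, cY a)) cU := by
    unfold Hc
    have hreg := H_triple_regroup q
    have hmono : H q (fun a => (cX a, cU a)) ≤ H q (fun a => (cY a, (cX a, cU a))) :=
      H_le_H_pair hq.1 cY (fun a => (cX a, cU a))
    have hXU := H_cXcU_eq hq h1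
    linarith
  have e4 : H q cY = H p Prod.snd := H_congr_dist (fun y => dist_cY_aux haux y)
  unfold Ic
  rw [e1, e2]
  linarith

lemma Ic_eq_H_snd {X Y U : Type} [Fintype X] [Fintype Y] [Fintype U] {p : X × Y → ℝ}
    {q : X × Y × U → ℝ} (haux : IsAux p q) (h1 : Indep q cU cX) (h2 : Indep q cU cY)
    {g' : X × U → Y} (hdet : ∀ a, q a ≠ 0 → cY a = g' (cX a, cU a)) :
    Ic q cX cY cU = H p Prod.snd := by
  have hq := haux.1
  have e1 := Hc_cX_cU_eq hq h1
  have e2 := Hc_cY_cU_eq hq h2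
  have e3 : Hc q (fun a => (cX a, cY a)) cU = H q cX := by
    unfold Hc
    have hreg := H_triple_regroup q
    have hcoll : H q (fun a => (cY a, (cX a, cU a))) = H q (fun a => (cX a, cU a)) :=
      H_pair_of_det hdet
    have hXU := H_cXcU_eq hq h1
    linarith
  have e4 : H q cY = H p Prod.snd := H_congr_dist (fun y => dist_cY_aux haux y)
  unfold Ic
  rw [e1, e2, e3]
  linarith


/-- if `p_X(x) = p_Y(y)` whenever `p(x,y) > 0`, then there is an auxiliary `U`
independent of `X`, independent of `Y`, with `H(X|Y,U) = 0` and `H(Y|X,U) = 0`;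
consequently `G_PPI(X;Y) = H(Y|X)`. -/
theorem stmt13 {X Y : Type} [Fintype X] [Fintype Y] (p : X × Y → ℝ) (hp : IsPMF p)
    (hmarg : ∀ x y, 0 < p (x, y) → dist p Prod.fst x = dist p Prod.snd y) :
    (∃ (U : Type) (_ : Fintype U) (q : X × Y × U → ℝ), IsAux p q ∧
        Indep q cU cX ∧ Indep q cU cY ∧
        Hc q cX (fun a => (cY a, cU a)) = 0 ∧
        Hc q cY (fun a => (cX a, cU a)) = 0) ∧
    GPPI p = Hc p Prod.snd Prod.fst := by
  obtain ⟨U, instU, q, haux, h1, h2, hdetX, hdetY⟩ := construction p hp hmarg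
  obtain ⟨g', hg'⟩ := hdetY
  have hswap : H p (fun a => (Prod.snd a, Prod.fst a)) = H p (fun a => (Prod.fst a, Prod.snd a)) :=
    H_swap p Prod.fst Prod.snd
  have hIc : Ic q cX cY cU = H p Prod.snd := Ic_eq_H_snd haux h1 h2 hg'
  have hval : Hc p Prod.snd Prod.fst = Ic q cX cY cU - I2 p Prod.fst Prod.snd := by
    rw [hIc]
    unfold I2 Hc
    linarith
  constructor
  · refine ⟨U, instU, q, haux, h1, h2, ?_, ?_⟩
    · obtain ⟨g, hg⟩ := hdetX
      exact sub_eq_zero_of_eq (H_pair_of_det hg)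
    · exact sub_eq_zero_of_eq (H_pair_of_det hg')
  · have hmem : Hc p Prod.snd Prod.fst ∈
        { r | ∃ (U : Type) (_ : Fintype U) (q : X × Y × U → ℝ), IsAux p q ∧
          Indep q cU cX ∧ Indep q cU cY ∧ r = Ic q cX cY cU - I2 p Prod.fst Prod.snd } :=
      ⟨U, instU, q, haux, h1, h2, hval⟩
    have hub : ∀ r ∈ { r | ∃ (U : Type) (_ : Fintype U) (q : X × Y × U → ℝ), IsAux p q ∧
        Indep q cU cX ∧ Indep q cU cY ∧ r = Ic q cX cY cU - I2 p Prod.fst Prod.snd },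
        r ≤ Hc p Prod.snd Prod.fst := by
      rintro r ⟨U', iU', q', haux', h1', h2', rfl⟩
      have hle : Ic q' cX cY cU ≤ H p Prod.snd := Ic_le_H_snd haux' h1' h2'
      unfold I2 Hc
      linarith
    exact le_antisymm (csSup_le ⟨_, hmem⟩ hub) (le_csSup ⟨_, hub⟩ hmem)


end GW
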